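/- For 0 < ε < 1 and β > 1, the PAS-Weibull average hazard h*(ε) = (M^{β-1}/(εη)^β)(1-(1-ε)^β) tends to +∞ as ε → 0⁺ (for fixed M > 0, η > 0). -/

import Mathlib

theorem pas_weibull_bao_divergence (M η β : ℝ) (hM : 0 < M) (hη : 0 < η) (hβ : 1 < β) :
    Filter.Tendsto (fun ε : ℝ => (M ^ (β - 1) / (ε * η) ^ β) * (1 - (1 - ε) ^ β))
      (nhdsWithin 0 (Set.Ioo 0 1)) Filter.atTop := by
  have hC : 0 < M ^ (β - 1) / η ^ β :=
    div_pos (Real.rpow_pos_of_pos hM _) (Real.rpow_pos_of_pos hη _)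
  have h1 : Filter.Tendsto (fun ε : ℝ => ε ^ (β - 1))
      (nhdsWithin 0 (Set.Ioo 0 1)) (nhdsWithin 0 (Set.Ioi 0)) := by
    apply tendsto_nhdsWithin_of_tendsto_nhds_of_eventually_within _
    · have hc : ContinuousAt (fun ε : ℝ => ε ^ (β - 1)) 0 :=
        Real.continuousAt_rpow_const 0 (β - 1) (Or.inr (by linarith))
      have h0 : (0 : ℝ) ^ (β - 1) = 0 := Real.zero_rpow (by linarith)
      simpa [h0] using hc.tendsto.mono_left nhdsWithin_le_nhds
    · filter_upwards [self_mem_nhdsWithin] with x hx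
      exact Real.rpow_pos_of_pos hx.1 _
  have h2 : Filter.Tendsto (fun ε : ℝ => ε ^ (1 - β))
      (nhdsWithin 0 (Set.Ioo 0 1)) Filter.atTop := by
    refine h1.inv_tendsto_nhdsGT_zero.congr' ?_
    filter_upwards [self_mem_nhdsWithin] with x hx
    simp only [Pi.inv_apply]
    rw [← Real.rpow_neg hx.1.le]
    ring_nf
  have hg : Filter.Tendsto (fun ε : ℝ => (M ^ (β - 1) / η ^ β) * ε ^ (1 - β))
      (nhdsWithin 0 (Set.Ioo 0 1)) Filter.atTop := h2.const_mul_atTop hC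
  refine Filter.tendsto_atTop_mono' _ ?_ hg
  filter_upwards [self_mem_nhdsWithin] with x hx
  obtain ⟨hx0, hx1⟩ := hx
  have hxβ : (0:ℝ) < x ^ β := Real.rpow_pos_of_pos hx0 _
  have hηβ : (0:ℝ) < η ^ β := Real.rpow_pos_of_pos hη _
  have hpos : 0 < M ^ (β - 1) / (x * η) ^ β :=
    div_pos (Real.rpow_pos_of_pos hM _) (Real.rpow_pos_of_pos (mul_pos hx0 hη) _)
  have hber : x ≤ 1 - (1 - x) ^ β := by
    have : (1 - x) ^ β ≤ (1 - x) ^ (1:ℝ) :=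
      Real.rpow_le_rpow_of_exponent_ge (by linarith) (by linarith) (by linarith)
    rw [Real.rpow_one] at this
    linarith
  have heq : (M ^ (β - 1) / η ^ β) * x ^ (1 - β) = (M ^ (β - 1) / (x * η) ^ β) * x := by
    rw [Real.mul_rpow hx0.le hη.le, Real.rpow_sub hx0, Real.rpow_one]
    field_simp
  calc (M ^ (β - 1) / η ^ β) * x ^ (1 - β) = (M ^ (β - 1) / (x * η) ^ β) * x := heq
    _ ≤ (M ^ (β - 1) / (x * η) ^ β) * (1 - (1 - x) ^ β) :=
      mul_le_mul_of_nonneg_left hber hpos.le
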